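/- If f : ℝⁿ → ℝ is Lipschitz with constant L, then φ_D is continuously differentiable on ℝⁿ, and for every x its derivative is given by averaging the (almost-everywhere defined, by Rademacher's theorem) derivative of f: fderiv φ_D (x) = (1/μ(D)) ∫_D fderiv f (x+y) dy. -/

import Mathlib

open MeasureTheory
open scoped NNReal Topology

/-- The Steklov-type average of `f` over `D`. -/
noncomputable def steklovAvg (n : ℕ) (D : Set (EuclideanSpace ℝ (Fin n)))
    (f : EuclideanSpace ℝ (Fin n) → ℝ) (x : EuclideanSpace ℝ (Fin n)) : ℝ :=
  (volume D).toReal⁻¹ • ∫ y in D, f (x + y)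

open Metric Filter Pointwise in
set_option maxHeartbeats 1000000 in
/-- The Steklov-type average of a Lipschitz function is continuously differentiable,
with derivative the average of the (a.e. defined) derivative of `f`. -/
theorem steklov_average_contDiff_and_fderiv (n : ℕ) (hn : 1 ≤ n)
    (D : Set (EuclideanSpace ℝ (Fin n))) (hDc : IsCompact D)
    (h0 : (0 : EuclideanSpace ℝ (Fin n)) ∈ interior D) (hD0 : 0 < volume D)
    (f : EuclideanSpace ℝ (Fin n) → ℝ) (L : ℝ≥0) (hf : LipschitzWith L f) :
    ContDiff ℝ 1 (steklovAvg n D f) ∧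
    ∀ x, fderiv ℝ (steklovAvg n D f) x =
      (volume D).toReal⁻¹ • ∫ y in D, fderiv ℝ f (x + y) := by
  classical
  set F : (EuclideanSpace ℝ (Fin n)) → ((EuclideanSpace ℝ (Fin n)) →L[ℝ] ℝ) := fderiv ℝ f with hF
  have hDm : MeasurableSet D := hDc.isClosed.measurableSet
  have hDfin : volume D ≠ ⊤ := hDc.measure_lt_top.ne
  have hbd : ∀ z : (EuclideanSpace ℝ (Fin n)), ‖F z‖ ≤ L := fun z => norm_fderiv_le_of_lipschitz ℝ hf
  -- integrability of the translated derivative on D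
  have hFint : ∀ x : (EuclideanSpace ℝ (Fin n)), IntegrableOn (fun y => F (x + y)) D := by
    intro x
    refine Integrable.mono' (g := fun _ => (L : ℝ)) ?_ ?_ (ae_of_all _ fun y => hbd _)
    · exact integrableOn_const hDc.measure_lt_top.ne
    · exact ((measurable_fderiv ℝ f).comp (measurable_const_add x)).aestronglyMeasurable
  -- integrability of translated f on D
  have hfint : ∀ X : (EuclideanSpace ℝ (Fin n)), IntegrableOn (fun y => f (X + y)) D := fun X =>
    ((hf.continuous.comp (continuous_const.add continuous_id)).continuousOn).integrableOn_compact
      hDc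
  set g : (EuclideanSpace ℝ (Fin n)) → ((EuclideanSpace ℝ (Fin n)) →L[ℝ] ℝ) := fun x => ∫ y in D, F (x + y) with hg
  -- shift representation of g
  have hg_repr : ∀ x : (EuclideanSpace ℝ (Fin n)), g x = ∫ z in (x +ᵥ D), F z := by
    intro x
    have h1 : (∫ z in (x +ᵥ D), F z) = ∫ z, (x +ᵥ D).indicator F z :=
      (integral_indicator (hDm.const_vadd x)).symm
    have h2 : (∫ z, (x +ᵥ D).indicator F z) = ∫ y, (x +ᵥ D).indicator F (x + y) :=
      (integral_add_left_eq_self ((x +ᵥ D).indicator F) x).symm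
    have h3 : ∀ y : (EuclideanSpace ℝ (Fin n)), (x +ᵥ D).indicator F (x + y) = D.indicator (fun y => F (x + y)) y := by
      intro y
      by_cases hy : y ∈ D
      · rw [Set.indicator_of_mem hy, Set.indicator_of_mem]
        exact Set.vadd_mem_vadd_set_iff.2 hy
      · rw [Set.indicator_of_notMem hy, Set.indicator_of_notMem]
        exact fun h => hy (Set.vadd_mem_vadd_set_iff.1 h)
    rw [h1, h2]
    simp only [h3]
    rw [integral_indicator hDm]
  -- integrability on translated sets
  have hFintA : ∀ x : (EuclideanSpace ℝ (Fin n)), IntegrableOn F (x +ᵥ D) := by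
    intro x
    refine Integrable.mono' (g := fun _ => (L : ℝ)) ?_ ?_ (ae_of_all _ fun y => hbd _)
    · refine integrableOn_const (ne_of_lt ?_)
      rw [measure_vadd]
      exact hDc.measure_lt_top
    · exact (measurable_fderiv ℝ f).aestronglyMeasurable
  -- key bound on increments of g via symmetric differences
  have hkey : ∀ x₀ x : (EuclideanSpace ℝ (Fin n)), ‖g x - g x₀‖ ≤
      2 * (L : ℝ) * (volume (cthickening (dist x x₀) D \ D)).toReal := by
    intro x₀ x
    set r := dist x x₀ with hr
    set S := cthickening r D \ D with hS
    have hsub : ∀ a b : (EuclideanSpace ℝ (Fin n)), dist a b = r → (a +ᵥ D) \ (b +ᵥ D) ⊆ b +ᵥ S := by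
      intro a b hab z hz
      obtain ⟨⟨d, hd, rfl⟩, hzB⟩ := hz
      refine ⟨-b + (a +ᵥ d), ⟨?_, ?_⟩, by simp only [vadd_eq_add]; abel⟩
      · refine mem_cthickening_of_dist_le _ d r D hd ?_
        have : (-b + (a +ᵥ d)) - d = a - b := by simp only [vadd_eq_add]; abel
        rw [dist_eq_norm, this, ← dist_eq_norm, hab]
      · intro hmem
        exact hzB ⟨-b + (a +ᵥ d), hmem, by simp only [vadd_eq_add]; abel⟩
    have hvolS : ∀ a b : (EuclideanSpace ℝ (Fin n)), dist a b = r →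
        volume ((a +ᵥ D) \ (b +ᵥ D)) ≤ volume S := by
      intro a b hab
      calc volume ((a +ᵥ D) \ (b +ᵥ D)) ≤ volume (b +ᵥ S) := measure_mono (hsub a b hab)
        _ = volume S := measure_vadd volume b S
    have hfinS : volume S < ⊤ := by
      refine lt_of_le_of_lt (measure_mono Set.diff_subset) ?_
      exact (hDc.isBounded.cthickening).measure_lt_top
    have hintdiff : ∀ a b : (EuclideanSpace ℝ (Fin n)), ‖∫ z in (a +ᵥ D) \ (b +ᵥ D), F z‖ ≤
        (L : ℝ) * (volume ((a +ᵥ D) \ (b +ᵥ D))).toReal := by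
      intro a b
      refine norm_setIntegral_le_of_norm_le_const ?_ (fun z _ => hbd z)
      · exact lt_of_le_of_lt (measure_mono Set.diff_subset)
          (by rw [measure_vadd]; exact hDc.measure_lt_top)
    have hsplit : g x - g x₀ = (∫ z in (x +ᵥ D) \ (x₀ +ᵥ D), F z)
        - ∫ z in (x₀ +ᵥ D) \ (x +ᵥ D), F z := by
      rw [hg_repr x, hg_repr x₀]
      rw [← integral_inter_add_diff (hDm.const_vadd x₀) (hFintA x),
        ← integral_inter_add_diff (hDm.const_vadd x) (hFintA x₀), Set.inter_comm]
      abel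
    rw [hsplit]
    have h1 := hintdiff x x₀
    have h2 := hintdiff x₀ x
    have hm1 : (volume ((x +ᵥ D) \ (x₀ +ᵥ D))).toReal ≤ (volume S).toReal :=
      ENNReal.toReal_mono hfinS.ne (hvolS x x₀ hr)
    have hm2 : (volume ((x₀ +ᵥ D) \ (x +ᵥ D))).toReal ≤ (volume S).toReal :=
      ENNReal.toReal_mono hfinS.ne (hvolS x₀ x (by rw [dist_comm]))
    calc ‖(∫ z in (x +ᵥ D) \ (x₀ +ᵥ D), F z) - ∫ z in (x₀ +ᵥ D) \ (x +ᵥ D), F z‖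
        ≤ ‖∫ z in (x +ᵥ D) \ (x₀ +ᵥ D), F z‖ + ‖∫ z in (x₀ +ᵥ D) \ (x +ᵥ D), F z‖ :=
          norm_sub_le _ _
      _ ≤ (L : ℝ) * (volume S).toReal + (L : ℝ) * (volume S).toReal := by
          refine add_le_add (h1.trans ?_) (h2.trans ?_)
          · exact mul_le_mul_of_nonneg_left hm1 L.coe_nonneg
          · exact mul_le_mul_of_nonneg_left hm2 L.coe_nonneg
      _ = 2 * (L : ℝ) * (volume S).toReal := by ring
  -- continuity of g
  have hgcont : Continuous g := by
    rw [continuous_iff_continuousAt]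
    intro x₀
    rw [ContinuousAt, tendsto_iff_norm_sub_tendsto_zero]
    have h1 : Tendsto (fun r : ℝ => volume (cthickening r D)) (𝓝 0) (𝓝 (volume D)) :=
      tendsto_measure_cthickening_of_isCompact hDc
    have heq : ∀ r : ℝ, volume (cthickening r D \ D) = volume (cthickening r D) - volume D :=
      fun r => measure_diff (self_subset_cthickening D) hDm.nullMeasurableSet hDfin
    have h2 : Tendsto (fun r : ℝ => volume (cthickening r D \ D)) (𝓝 0) (𝓝 0) := by
      simp only [heq]
      simpa using ENNReal.Tendsto.sub h1 tendsto_const_nhds (Or.inr hDfin)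
    have h3 : Tendsto (fun r : ℝ => (volume (cthickening r D \ D)).toReal) (𝓝 0) (𝓝 0) := by
      simpa [Function.comp_def] using (ENNReal.tendsto_toReal (by simp)).comp h2
    have hd : Tendsto (fun x : (EuclideanSpace ℝ (Fin n)) => dist x x₀) (𝓝 x₀) (𝓝 0) := by
      simpa using tendsto_iff_dist_tendsto_zero.1 (Filter.tendsto_id (x := 𝓝 x₀))
    have hm : Tendsto (fun x : (EuclideanSpace ℝ (Fin n)) =>
        2 * (L : ℝ) * (volume (cthickening (dist x x₀) D \ D)).toReal) (𝓝 x₀) (𝓝 0) := by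
      simpa using (h3.comp hd).const_mul (2 * (L : ℝ))
    exact squeeze_zero (fun x => norm_nonneg _) (fun x => hkey x₀ x) hm
  -- directional derivative along lines
  have hline : ∀ (z v : (EuclideanSpace ℝ (Fin n))) (t₀ : ℝ),
      HasDerivAt (fun t : ℝ => ∫ y in D, f (z + t • v + y)) ((g (z + t₀ • v)) v) t₀ := by
    intro z v t₀
    rw [hasDerivAt_iff_tendsto_slope]
    have happly : (g (z + t₀ • v)) v = ∫ y in D, F (z + t₀ • v + y) v :=
      ContinuousLinearMap.integral_apply (hFint (z + t₀ • v)) v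
    rw [happly]
    have hae : ∀ᵐ y ∂(volume.restrict D), DifferentiableAt ℝ f (z + t₀ • v + y) := by
      refine ae_restrict_of_ae ?_
      have h := hf.ae_differentiableAt (μ := volume)
      exact ae_of_ae_map (measurable_const_add (z + t₀ • v)).aemeasurable
        (by rwa [map_add_left_eq_self])
    have hptwise : ∀ᵐ y ∂(volume.restrict D),
        Tendsto (fun s : ℝ => (f (z + s • v + y) - f (z + t₀ • v + y)) / (s - t₀))
          (𝓝[≠] t₀) (𝓝 (F (z + t₀ • v + y) v)) := by
      filter_upwards [hae] with y hy
      have hcurve : HasDerivAt (fun t : ℝ => z + t • v + y) v t₀ := by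
        simpa using (((hasDerivAt_id t₀).smul_const v).const_add z).add_const y
      have hcomp : HasDerivAt (fun t : ℝ => f (z + t • v + y)) (F (z + t₀ • v + y) v) t₀ :=
        hy.hasFDerivAt.comp_hasDerivAt t₀ hcurve
      have := hasDerivAt_iff_tendsto_slope.1 hcomp
      refine this.congr fun s => ?_
      rw [slope_def_field]
    have hbound : ∀ s : ℝ, ∀ y : (EuclideanSpace ℝ (Fin n)),
        ‖(f (z + s • v + y) - f (z + t₀ • v + y)) / (s - t₀)‖ ≤ (L : ℝ) * ‖v‖ := by
      intro s y
      rcases eq_or_ne s t₀ with rfl | hs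
      · simp [mul_nonneg L.coe_nonneg (norm_nonneg v)]
      · have hnum : ‖f (z + s • v + y) - f (z + t₀ • v + y)‖ ≤
            (L : ℝ) * ‖v‖ * ‖s - t₀‖ := by
          have := hf.dist_le_mul (z + s • v + y) (z + t₀ • v + y)
          rw [dist_eq_norm, dist_eq_norm] at this
          have harg : (z + s • v + y) - (z + t₀ • v + y) = (s - t₀) • v := by
            rw [sub_smul]; abel
          rw [harg, norm_smul] at this
          calc ‖f (z + s • v + y) - f (z + t₀ • v + y)‖ ≤ (L : ℝ) * (‖s - t₀‖ * ‖v‖) := this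
            _ = (L : ℝ) * ‖v‖ * ‖s - t₀‖ := by ring
        have hden : (0 : ℝ) < ‖s - t₀‖ := by
          rw [norm_pos_iff]; exact sub_ne_zero.2 hs
        rw [norm_div]
        rw [div_le_iff₀ hden]
        exact hnum
    have hDCT := tendsto_integral_filter_of_dominated_convergence
      (μ := volume.restrict D) (l := 𝓝[≠] t₀)
      (F := fun s y => (f (z + s • v + y) - f (z + t₀ • v + y)) / (s - t₀))
      (f := fun y => F (z + t₀ • v + y) v) (bound := fun _ => (L : ℝ) * ‖v‖)
      (Eventually.of_forall fun s => by
        refine Continuous.aestronglyMeasurable ?_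
        exact ((hf.continuous.comp (continuous_const.add continuous_id)).sub
          (hf.continuous.comp (continuous_const.add continuous_id))).div_const _)
      (Eventually.of_forall fun s => ae_of_all _ fun y => hbound s y)
      (integrableOn_const hDc.measure_lt_top.ne)
      hptwise
    refine hDCT.congr' ?_
    filter_upwards [self_mem_nhdsWithin] with s hs
    rw [slope_def_field]
    rw [← integral_sub (hfint (z + s • v)) (hfint (z + t₀ • v))]
    rw [← integral_div]
  -- Fréchet differentiability of the unscaled average
  have hmain : ∀ x : (EuclideanSpace ℝ (Fin n)), HasFDerivAt (fun X : (EuclideanSpace ℝ (Fin n)) => ∫ y in D, f (X + y)) (g x) x := by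
    intro x
    rw [hasFDerivAt_iff_isLittleO_nhds_zero, Asymptotics.isLittleO_iff]
    intro c hc
    have hcg : ∀ᶠ x' in 𝓝 x, ‖g x' - g x‖ ≤ c := by
      have hmem : ∀ᶠ x' in 𝓝 x, g x' ∈ closedBall (g x) c :=
        (hgcont.tendsto x) (closedBall_mem_nhds _ hc)
      filter_upwards [hmem] with x' hx'
      rwa [mem_closedBall, dist_eq_norm] at hx'
    obtain ⟨δ, hδ, hball⟩ := Metric.eventually_nhds_iff_ball.1 hcg
    rw [Metric.eventually_nhds_iff_ball]
    refine ⟨δ, hδ, fun h hh => ?_⟩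
    rw [mem_ball, dist_zero_right] at hh
    have hcont1 : Continuous (fun t : ℝ => (g (x + t • h)) h) :=
      (hgcont.comp (continuous_const.add (continuous_id.smul continuous_const))).clm_apply
        continuous_const
    have hFTC : (∫ t in (0:ℝ)..1, (g (x + t • h)) h)
        = (∫ y in D, f (x + h + y)) - ∫ y in D, f (x + y) := by
      have := intervalIntegral.integral_eq_sub_of_hasDerivAt
        (f := fun t : ℝ => ∫ y in D, f (x + t • h + y))
        (f' := fun t : ℝ => (g (x + t • h)) h)
        (fun t _ => hline x h t) (hcont1.intervalIntegrable 0 1)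
      rw [this]
      norm_num
    have hconst : (∫ t in (0:ℝ)..1, (g x) h) = (g x) h := by
      simp
    have hdiff : (∫ y in D, f (x + h + y)) - (∫ y in D, f (x + y)) - (g x) h
        = ∫ t in (0:ℝ)..1, ((g (x + t • h)) h - (g x) h) := by
      rw [intervalIntegral.integral_sub (hcont1.intervalIntegrable 0 1)
        (intervalIntegrable_const), hFTC, hconst]
    rw [hdiff]
    have hbnd : ∀ t ∈ Set.uIoc (0:ℝ) 1, ‖(g (x + t • h)) h - (g x) h‖ ≤ c * ‖h‖ := by
      intro t ht
      rw [Set.uIoc_of_le zero_le_one] at ht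
      have hxmem : x + t • h ∈ ball x δ := by
        rw [mem_ball, dist_eq_norm, add_sub_cancel_left, norm_smul]
        calc ‖t‖ * ‖h‖ ≤ 1 * ‖h‖ := by
              refine mul_le_mul_of_nonneg_right ?_ (norm_nonneg h)
              rw [Real.norm_eq_abs, abs_of_pos ht.1]
              exact ht.2
          _ = ‖h‖ := one_mul _
          _ < δ := hh
      calc ‖(g (x + t • h)) h - (g x) h‖ = ‖(g (x + t • h) - g x) h‖ := by
            rw [ContinuousLinearMap.sub_apply]
        _ ≤ ‖g (x + t • h) - g x‖ * ‖h‖ := ContinuousLinearMap.le_opNorm _ _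
        _ ≤ c * ‖h‖ := mul_le_mul_of_nonneg_right (hball _ hxmem) (norm_nonneg h)
    calc ‖∫ t in (0:ℝ)..1, ((g (x + t • h)) h - (g x) h)‖ ≤ c * ‖h‖ * |1 - 0| :=
          intervalIntegral.norm_integral_le_of_norm_le_const hbnd
      _ = c * ‖h‖ := by norm_num
  -- assemble
  set c₀ : ℝ := (volume D).toReal⁻¹ with hc₀
  have hsteklov : ∀ x : (EuclideanSpace ℝ (Fin n)), HasFDerivAt (steklovAvg n D f) (c₀ • g x) x := by
    intro x
    have := (hmain x).const_smul c₀
    exact this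
  constructor
  · rw [contDiff_one_iff_fderiv]
    refine ⟨fun x => (hsteklov x).differentiableAt, ?_⟩
    exact (hgcont.const_smul c₀).congr fun x => ((hsteklov x).fderiv).symm
  · intro x
    exact (hsteklov x).fderiv
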